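/- Let X be a locally convex space whose topology is induced by a directed family (‖·‖_α)_{α∈I} of seminorms. An operator T ∈ GL(X) is topologically expansive if and only if for every x ∈ X \ {0} there exists α ∈ I such that ‖x‖_α ≠ 0 and, for each y ∈ Orb(x,T) := {Tⁿx : n ∈ ℤ}, there exists n ∈ ℤ with ‖Tⁿy‖_α ≥ 2‖y‖_α. -/

import Mathlib

open Filter Topology Set

/-- `T ∈ GL(X)` is topologically expansive: for each nonzero `x` there is an index `α` such
that `sup_{n∈ℤ} pα (Tⁿ x) = ∞`. -/
def TopologicallyExpansive {𝕂 : Type*} [RCLike 𝕂] {X : Type*} [AddCommGroup X] [Module 𝕂 X]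
    [TopologicalSpace X] [IsTopologicalAddGroup X]
    {I : Type*} (p : I → Seminorm 𝕂 X) (T : X ≃L[𝕂] X) : Prop :=
  ∀ x : X, x ≠ 0 → ∃ α : I, ∀ R : ℝ, ∃ n : ℤ, R < p α ((T ^ n) x)

/-- An operator `T ∈ GL(X)` on a locally convex space, with topology induced by the directed
seminorm family `p`, is topologically expansive if and only if for every `x ≠ 0` there exists
`α` such that `pα x ≠ 0` and, for each `y` in the orbit `{Tⁿ x : n ∈ ℤ}`, there exists `n ∈ ℤ`
with `pα (Tⁿ y) ≥ 2 pα y`. -/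
theorem topologicallyExpansive_iff
    {𝕂 : Type*} [RCLike 𝕂] {X : Type*} [AddCommGroup X] [Module 𝕂 X]
    [TopologicalSpace X] [IsTopologicalAddGroup X] [ContinuousSMul 𝕂 X]
    {I : Type*} [Nonempty I] (p : I → Seminorm 𝕂 X) (hp : WithSeminorms p)
    (hdir : ∀ α β : I, ∃ γ : I, p α ≤ p γ ∧ p β ≤ p γ)
    (T : X ≃L[𝕂] X) :
    TopologicallyExpansive p T ↔
      ∀ x : X, x ≠ 0 → ∃ α : I, p α x ≠ 0 ∧
        ∀ y ∈ Set.range (fun n : ℤ => (T ^ n) x), ∃ n : ℤ, 2 * p α y ≤ p α ((T ^ n) y) := by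
  constructor
  · intro h x hx
    obtain ⟨α₀, hα₀⟩ := h x hx
    obtain ⟨n₀, hn₀⟩ := hα₀ 0
    -- there exists β with p β x ≠ 0, by continuity of T ^ n₀
    have hβ : ∃ β : I, p β x ≠ 0 := by
      by_contra hc
      push_neg at hc
      set q : Seminorm 𝕂 X :=
        (p α₀).comp ((T ^ n₀ : X ≃L[𝕂] X) : X →L[𝕂] X).toLinearMap with hq_def
      have hqc : Continuous q := by
        have : Continuous fun z => (p α₀) ((T ^ n₀) z) :=
          (hp.continuous_seminorm α₀).comp (T ^ n₀).continuous
        exact this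
      obtain ⟨s, C, hC0, hle⟩ := Seminorm.bound_of_continuous hp q hqc
      have hsup : (s.sup p) x ≤ 0 :=
        Seminorm.finset_sup_apply_le le_rfl (fun i _ => le_of_eq (hc i))
      have hqx : q x ≤ 0 := by
        calc q x ≤ (C • s.sup p) x := hle x
          _ = (C : ℝ) * (s.sup p) x := rfl
          _ ≤ 0 := by
              have : (0:ℝ) ≤ (C : ℝ) := C.coe_nonneg
              nlinarith [apply_nonneg (s.sup p) x]
      have : q x = p α₀ ((T ^ n₀) x) := rfl
      linarith [hn₀, this ▸ hqx]
    obtain ⟨β, hβ⟩ := hβ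
    obtain ⟨γ, hγ₁, hγ₂⟩ := hdir α₀ β
    refine ⟨γ, ?_, ?_⟩
    · have : 0 < p β x := lt_of_le_of_ne (apply_nonneg _ _) (Ne.symm hβ)
      exact ne_of_gt (lt_of_lt_of_le this (hγ₂ x))
    · rintro y ⟨m, rfl⟩
      obtain ⟨k, hk⟩ := hα₀ (2 * p γ ((T ^ m) x))
      refine ⟨k - m, ?_⟩
      have hkm : (T ^ (k - m)) ((T ^ m) x) = (T ^ k) x := by
        rw [show (T ^ k) x = (T ^ (k - m) * T ^ m) x by rw [← zpow_add, sub_add_cancel]]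
        rfl
      rw [hkm]
      exact le_trans (le_of_lt hk) (hγ₁ _)
  · intro h x hx
    obtain ⟨α, hx0, horb⟩ := h x hx
    refine ⟨α, fun R => ?_⟩
    have hpos : 0 < p α x := lt_of_le_of_ne (apply_nonneg _ _) (Ne.symm hx0)
    have key : ∀ k : ℕ, ∃ n : ℤ, 2 ^ k * p α x ≤ p α ((T ^ n) x) := by
      intro k
      induction k with
      | zero =>
          refine ⟨0, ?_⟩
          rw [show (T ^ (0:ℤ)) x = x from rfl]
          norm_num
      | succ k ih =>
          obtain ⟨n, hn⟩ := ih
          obtain ⟨m, hm⟩ := horb ((T ^ n) x) ⟨n, rfl⟩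
          refine ⟨m + n, ?_⟩
          have hmn : (T ^ (m + n)) x = (T ^ m) ((T ^ n) x) := by
            rw [zpow_add]; rfl
          calc 2 ^ (k + 1) * p α x = 2 * (2 ^ k * p α x) := by ring
            _ ≤ 2 * p α ((T ^ n) x) := by linarith
            _ ≤ p α ((T ^ m) ((T ^ n) x)) := hm
            _ = p α ((T ^ (m + n)) x) := by rw [hmn]
    obtain ⟨k, hk⟩ := pow_unbounded_of_one_lt (R / p α x) (by norm_num : (1:ℝ) < 2)
    obtain ⟨n, hn⟩ := key k
    exact ⟨n, lt_of_lt_of_le ((div_lt_iff₀ hpos).mp hk) hn⟩
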